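/- For complex a1, a2, b1 with s1 = b1 - a1 - a2, the ratio Γ(a1+n)Γ(a2+n)/(Γ(b1+n)Γ(-s1+n)) tends to 1 as the natural number n tends to infinity. -/

import Mathlib

open Filter Complex Finset

private lemma nat_inv_tendsto : Tendsto (fun k : ℕ => ((k : ℂ))⁻¹) atTop (nhds 0) := by
  rw [tendsto_zero_iff_norm_tendsto_zero]
  simp only [norm_inv, Complex.norm_natCast]
  exact tendsto_inv_atTop_zero.comp tendsto_natCast_atTop_atTop

private lemma ratio_tendsto_one (a b : ℂ) :
    Tendsto (fun k : ℕ => ((k : ℂ) + a) / ((k : ℂ) + b)) atTop (nhds 1) := by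
  have h : Tendsto (fun k : ℕ => (1 + a * ((k : ℂ))⁻¹) / (1 + b * ((k : ℂ))⁻¹))
      atTop (nhds 1) := by
    have h0 : Tendsto (fun k : ℕ => (1 + a * ((k : ℂ))⁻¹) / (1 + b * ((k : ℂ))⁻¹))
        atTop (nhds ((1 + a * 0) / (1 + b * 0))) := by
      refine Tendsto.div ?_ ?_ (by norm_num)
      · exact tendsto_const_nhds.add (nat_inv_tendsto.const_mul a)
      · exact tendsto_const_nhds.add (nat_inv_tendsto.const_mul b)
    simpa using h0
  refine h.congr' ?_
  filter_upwards [eventually_ge_atTop 1] with k hk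
  have hk0 : (k : ℂ) ≠ 0 := Nat.cast_ne_zero.mpr (by omega)
  have h1 : (1 + a * ((k:ℂ))⁻¹) = ((k:ℂ) + a) * (k:ℂ)⁻¹ := by field_simp
  have h2 : (1 + b * ((k:ℂ))⁻¹) = ((k:ℂ) + b) * (k:ℂ)⁻¹ := by field_simp
  rw [h1, h2, mul_div_mul_right _ _ (inv_ne_zero hk0)]

private lemma cpow_ratio_tendsto_one (c : ℂ) :
    Tendsto (fun m : ℕ => ((m : ℂ)) ^ c / ((m : ℂ) + 1) ^ c) atTop (nhds 1) := by
  have hbase : Tendsto (fun m : ℕ => (m : ℂ) / ((m : ℂ) + 1)) atTop (nhds 1) := by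
    have := ratio_tendsto_one 0 1
    simpa using this
  have hc : Tendsto (fun m : ℕ => ((m : ℂ) / ((m : ℂ) + 1)) ^ c) atTop (nhds 1) := by
    have hcont : ContinuousAt (· ^ c) (1 : ℂ) := continuousAt_cpow_const one_mem_slitPlane
    have := hcont.tendsto.comp hbase
    rw [Complex.one_cpow] at this
    exact this
  refine hc.congr' ?_
  filter_upwards [eventually_ge_atTop 1] with m hm
  have hm0 : (0:ℝ) < (m : ℝ) := by exact_mod_cast Nat.pos_of_ne_zero (by omega)
  have hb1 : (0:ℝ) ≤ (m : ℝ) + 1 := by linarith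
  have ha1 : (0:ℝ) ≤ (m : ℝ) / ((m : ℝ) + 1) := div_nonneg hm0.le hb1
  have hab : ((m : ℝ) / ((m : ℝ) + 1)) * ((m : ℝ) + 1) = (m : ℝ) := by
    field_simp
  have hmul := Complex.mul_cpow_ofReal_nonneg ha1 hb1 c
  rw [← Complex.ofReal_mul, hab] at hmul
  have hne0 : ((m : ℂ) + 1) ^ c ≠ 0 := by
    rw [Ne, Complex.cpow_eq_zero_iff]
    simp only [ne_eq, not_and]
    intro h
    exfalso
    have : ((m : ℝ) : ℂ) + 1 = 0 := by push_cast; exact_mod_cast h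
    have : ((m : ℝ) + 1 : ℝ) = 0 := by exact_mod_cast (by push_cast at this ⊢; exact_mod_cast this)
    linarith
  push_cast at hmul
  rw [eq_div_iff hne0]
  exact hmul.symm

private lemma fact_prod (k m : ℕ) :
    (k + m).factorial = k.factorial * ∏ j ∈ range m, (k + 1 + j) := by
  induction m with
  | zero => simp
  | succ m ih =>
      rw [Finset.prod_range_succ, ← mul_assoc, ← ih, ← Nat.add_assoc, Nat.factorial_succ]
      ring

private lemma Gamma_add_nat (c : ℂ) (h : ∀ j : ℕ, c + j ≠ 0) (n : ℕ) :
    Complex.Gamma (c + n) = Complex.Gamma c * ∏ j ∈ range n, (c + j) := by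
  induction n with
  | zero => simp
  | succ n ih =>
      have : c + (n + 1 : ℕ) = (c + n) + 1 := by push_cast; ring
      rw [this, Complex.Gamma_add_one _ (h n), ih, Finset.prod_range_succ]
      ring

private lemma aux_L (c : ℂ) :
    Tendsto (fun n : ℕ => Complex.Gamma (c + n) / (Complex.Gamma n * (n : ℂ) ^ c))
      atTop (nhds 1) := by
  by_cases hp : ∃ m : ℕ, c = -m
  · obtain ⟨m, rfl⟩ := hp
    rw [← tendsto_add_atTop_iff_nat (m + 1)]
    have key : ∀ k : ℕ, Complex.Gamma (-(m : ℂ) + ((k + (m + 1) : ℕ) : ℂ)) /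
        (Complex.Gamma ((k + (m + 1) : ℕ) : ℂ) * ((k + (m + 1) : ℕ) : ℂ) ^ (-(m : ℂ))) =
        ∏ j ∈ range m, (((k : ℂ) + m + 1) / ((k : ℂ) + 1 + j)) := by
      intro k
      have h1 : -(m : ℂ) + ((k + (m + 1) : ℕ) : ℂ) = (k : ℂ) + 1 := by push_cast; ring
      have h2 : Complex.Gamma ((k : ℂ) + 1) = (k.factorial : ℂ) :=
        Complex.Gamma_nat_eq_factorial k
      have h3 : ((k + (m + 1) : ℕ) : ℂ) = ((k + m : ℕ) : ℂ) + 1 := by push_cast; ring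
      have h4 : Complex.Gamma (((k + m : ℕ) : ℂ) + 1) = ((k + m).factorial : ℂ) :=
        Complex.Gamma_nat_eq_factorial (k + m)
      have h5 : ((k + (m + 1) : ℕ) : ℂ) ^ (-(m : ℂ)) =
          ((((k + (m + 1) : ℕ) : ℂ)) ^ m)⁻¹ := by
        rw [← Complex.cpow_natCast, ← Complex.cpow_neg]
      have h4' : Complex.Gamma ((k + (m + 1) : ℕ) : ℂ) = ((k + m).factorial : ℂ) := by
        rw [h3]; exact h4
      rw [h1, h2, h4', h5]
      have hfac : ((k + m).factorial : ℂ) =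
          (k.factorial : ℂ) * ∏ j ∈ range m, ((k : ℂ) + 1 + j) := by
        rw [fact_prod]; push_cast; ring_nf
      rw [hfac, ← div_eq_mul_inv, div_div_eq_mul_div]
      have hX : (((k + (m + 1) : ℕ) : ℂ)) ^ m = ((k : ℂ) + m + 1) ^ m := by
        push_cast; ring_nf
      rw [hX, mul_comm (k.factorial : ℂ) (((k : ℂ) + m + 1) ^ m), mul_comm,
        mul_div_mul_left _ _ (by exact_mod_cast k.factorial_ne_zero : (k.factorial : ℂ) ≠ 0),
        Finset.prod_div_distrib, Finset.prod_const, Finset.card_range]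
    refine Tendsto.congr (fun k => (key k).symm) ?_
    have := tendsto_finset_prod (f := fun (j : ℕ) (k : ℕ) => ((k : ℂ) + m + 1) / ((k : ℂ) + 1 + j))
      (x := atTop) (a := fun _ => (1 : ℂ)) (range m) (fun j _ => by
        simpa [add_assoc] using ratio_tendsto_one ((m : ℂ) + 1) (1 + (j : ℂ)))
    simpa using this
  · push_neg at hp
    have hj : ∀ j : ℕ, c + j ≠ 0 := by
      intro j h0
      exact hp j (by linear_combination h0)
    have hG0 : Complex.Gamma c ≠ 0 := Complex.Gamma_ne_zero hp
    have hGS := Complex.GammaSeq_tendsto_Gamma c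
    rw [← tendsto_add_atTop_iff_nat 1]
    have hlim : Tendsto
        (fun m : ℕ => Complex.Gamma c / Complex.GammaSeq c m * ((m : ℂ) ^ c / ((m : ℂ) + 1) ^ c))
        atTop (nhds (Complex.Gamma c / Complex.Gamma c * 1)) :=
      (tendsto_const_nhds.div hGS hG0).mul (cpow_ratio_tendsto_one c)
    rw [div_self hG0, one_mul] at hlim
    refine hlim.congr' ?_
    filter_upwards [eventually_ge_atTop 1] with m hm
    have hm0 : (m : ℂ) ≠ 0 := Nat.cast_ne_zero.mpr (by omega)
    have hmc : (m : ℂ) ^ c ≠ 0 := by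
      rw [Ne, Complex.cpow_eq_zero_iff]; tauto
    have hm1c : ((m : ℂ) + 1) ^ c ≠ 0 := by
      rw [Ne, Complex.cpow_eq_zero_iff]
      intro ⟨h, _⟩
      have : ((m + 1 : ℕ) : ℂ) = 0 := by push_cast; linear_combination h
      exact Nat.cast_ne_zero.mpr (by omega) this
    have hP : (∏ j ∈ range (m + 1), (c + j)) ≠ 0 := Finset.prod_ne_zero_iff.mpr fun j _ => hj j
    have hfac : ((m.factorial : ℂ)) ≠ 0 := by exact_mod_cast m.factorial_ne_zero
    have e1 : Complex.Gamma (c + ((m + 1 : ℕ) : ℂ)) =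
        Complex.Gamma c * ∏ j ∈ range (m + 1), (c + j) := Gamma_add_nat c hj (m + 1)
    have e2 : Complex.Gamma (((m + 1 : ℕ) : ℂ)) = (m.factorial : ℂ) := by
      rw [show ((m + 1 : ℕ) : ℂ) = (m : ℂ) + 1 by push_cast; ring]
      exact Complex.Gamma_nat_eq_factorial m
    have e3 : ((m + 1 : ℕ) : ℂ) ^ c = ((m : ℂ) + 1) ^ c := by norm_cast
    rw [e1, e2, e3]
    unfold Complex.GammaSeq
    field_simp

private lemma div_div_div_same' {x y K : ℂ} (hK : K ≠ 0) : x / K / (y / K) = x / y := by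
  rcases eq_or_ne y 0 with h | h
  · simp [h]
  · field_simp

theorem gamma_ratio_tendsto_one (a1 a2 b1 s1 : ℂ) (hs : s1 = b1 - a1 - a2) :
    Tendsto (fun n : ℕ =>
        Complex.Gamma (a1 + n) * Complex.Gamma (a2 + n) /
          (Complex.Gamma (b1 + n) * Complex.Gamma (-s1 + n)))
      atTop (nhds 1) := by
  have hlim : Tendsto (fun n : ℕ =>
      (Complex.Gamma (a1 + n) / (Complex.Gamma n * (n : ℂ) ^ a1) *
        (Complex.Gamma (a2 + n) / (Complex.Gamma n * (n : ℂ) ^ a2))) /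
      (Complex.Gamma (b1 + n) / (Complex.Gamma n * (n : ℂ) ^ b1) *
        (Complex.Gamma (-s1 + n) / (Complex.Gamma n * (n : ℂ) ^ (-s1)))))
      atTop (nhds ((1 * 1) / (1 * 1))) :=
    ((aux_L a1).mul (aux_L a2)).div ((aux_L b1).mul (aux_L (-s1))) (by norm_num)
  rw [show ((1 : ℂ) * 1) / (1 * 1) = 1 by norm_num] at hlim
  refine Tendsto.congr' ?_ hlim
  filter_upwards [eventually_ge_atTop 1] with n hn
  have hn0 : (n : ℂ) ≠ 0 := Nat.cast_ne_zero.mpr (by omega)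
  have hG : Complex.Gamma (n : ℂ) ≠ 0 := by
    refine Complex.Gamma_ne_zero fun m h => ?_
    have hre := congrArg Complex.re h
    simp only [Complex.natCast_re, Complex.neg_re] at hre
    have h1 : (1 : ℝ) ≤ (n : ℝ) := by exact_mod_cast hn
    have h2 : (0 : ℝ) ≤ (m : ℝ) := Nat.cast_nonneg m
    linarith
  have hcp : ∀ z : ℂ, (n : ℂ) ^ z ≠ 0 := fun z => by
    rw [Ne, Complex.cpow_eq_zero_iff]; tauto
  have hpow : (n : ℂ) ^ b1 * (n : ℂ) ^ (-s1) = (n : ℂ) ^ a1 * (n : ℂ) ^ a2 := by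
    rw [← Complex.cpow_add _ _ hn0, ← Complex.cpow_add _ _ hn0]
    congr 1
    rw [hs]; ring
  rw [div_mul_div_comm, div_mul_div_comm]
  have hKeq : Complex.Gamma (n : ℂ) * (n : ℂ) ^ b1 * (Complex.Gamma (n : ℂ) * (n : ℂ) ^ (-s1)) =
      Complex.Gamma (n : ℂ) * (n : ℂ) ^ a1 * (Complex.Gamma (n : ℂ) * (n : ℂ) ^ a2) := by
    calc _ = Complex.Gamma (n : ℂ) * Complex.Gamma (n : ℂ) *
          ((n : ℂ) ^ b1 * (n : ℂ) ^ (-s1)) := by ring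
    _ = _ := by rw [hpow]; ring
  rw [hKeq]
  exact div_div_div_same' (mul_ne_zero (mul_ne_zero hG (hcp a1))
    (mul_ne_zero hG (hcp a2)))
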